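/- Let ψ : ℝ → ℝ be twice continuously differentiable on a neighborhood of [-1,1], and let l ∈ ℕ with l ≥ 2. Then ∫_{0}^{1} x^l * (deriv (fun y ↦ (1 - y²) * deriv ψ y)) x dx = -(l*(l+1)) * ∫_{0}^{1} x^l * ψ x dx + (l*(l-1)) * ∫_{0}^{1} x^(l-2) * ψ x dx. -/

import Mathlib

theorem laplace_beltrami_positive_half_moment
    (ψ : ℝ → ℝ) (U : Set ℝ) (hU : IsOpen U) (hsub : Set.Icc (-1 : ℝ) 1 ⊆ U)
    (hψ : ContDiffOn ℝ 2 ψ U) (l : ℕ) (hl : 2 ≤ l) :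
    ∫ x in (0 : ℝ)..1, x ^ l * deriv (fun y => (1 - y ^ 2) * deriv ψ y) x =
      -((l : ℝ) * (l + 1)) * (∫ x in (0 : ℝ)..1, x ^ l * ψ x)
      + (l : ℝ) * ((l : ℝ) - 1) * ∫ x in (0 : ℝ)..1, x ^ (l - 2) * ψ x := by
  have hsub' : Set.Icc (0:ℝ) 1 ⊆ U := fun x hx => hsub ⟨by linarith [hx.1], hx.2⟩
  have huIcc : Set.uIcc (0:ℝ) 1 = Set.Icc (0:ℝ) 1 := Set.uIcc_of_le (by norm_num)
  have hmem : ∀ x ∈ Set.uIcc (0:ℝ) 1, x ∈ U := by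
    rw [huIcc]; exact fun x hx => hsub' hx
  set φ := deriv ψ with hφdef
  have hφ : ContDiffOn ℝ 1 φ U := hψ.deriv_of_isOpen hU (by norm_num)
  set g : ℝ → ℝ := fun y => (1 - y ^ 2) * φ y with hgdef
  have hg : ContDiffOn ℝ 1 g U := by
    exact (ContDiffOn.sub contDiffOn_const (contDiffOn_id.pow 2)).mul hφ
  -- first integration by parts
  have ibp1 : ∫ x in (0:ℝ)..1, x ^ l * deriv g x
      = - ∫ x in (0:ℝ)..1, ((l:ℝ) * x ^ (l-1)) * g x := by
    have h := intervalIntegral.integral_mul_deriv_eq_deriv_mul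
      (u := fun x : ℝ => x ^ l) (u' := fun x : ℝ => (l:ℝ) * x ^ (l-1))
      (v := g) (v' := deriv g) (a := (0:ℝ)) (b := 1)
      (fun x _ => by simpa using hasDerivAt_pow l x)
      (fun x hx => ((hg.differentiableOn one_ne_zero x (hmem x hx)).differentiableAt
        (hU.mem_nhds (hmem x hx))).hasDerivAt)
      ((continuous_const.mul (continuous_pow _)).intervalIntegrable 0 1)
      (((hg.continuousOn_deriv_of_isOpen hU le_rfl).mono hsub').mono
        (by rw [huIcc])|>.intervalIntegrable)
    rw [h]
    have hg1 : g 1 = 0 := by simp [hgdef]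
    simp [hg1, zero_pow (show l ≠ 0 by omega)]
  -- the inner integrand equality
  have hinner : ∀ x : ℝ, ((l:ℝ) * x ^ (l-1)) * g x
      = ((l:ℝ) * (x ^ (l-1) - x ^ (l+1))) * φ x := by
    intro x
    have hx2 : x ^ (l-1) * x ^ 2 = x ^ (l+1) := by
      rw [← pow_add]; congr 1; omega
    simp only [hgdef]
    rw [← hx2]; ring
  -- second integration by parts
  have hψderiv : ∀ x ∈ Set.uIcc (0:ℝ) 1, HasDerivAt ψ (φ x) x := fun x hx =>
    ((hψ.differentiableOn (by norm_num) x (hmem x hx)).differentiableAt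
      (hU.mem_nhds (hmem x hx))).hasDerivAt
  have ibp2 : ∫ x in (0:ℝ)..1, ((l:ℝ) * (x ^ (l-1) - x ^ (l+1))) * φ x
      = - ∫ x in (0:ℝ)..1,
          ((l:ℝ) * (((l-1:ℕ):ℝ) * x ^ (l-2) - ((l+1:ℕ):ℝ) * x ^ l)) * ψ x := by
    have h := intervalIntegral.integral_mul_deriv_eq_deriv_mul
      (u := fun x : ℝ => (l:ℝ) * (x ^ (l-1) - x ^ (l+1)))
      (u' := fun x : ℝ => (l:ℝ) * (((l-1:ℕ):ℝ) * x ^ (l-2) - ((l+1:ℕ):ℝ) * x ^ l))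
      (v := ψ) (v' := φ) (a := (0:ℝ)) (b := 1)
      (fun x _ => by
        have := (((hasDerivAt_pow (l-1) x).sub (hasDerivAt_pow (l+1) x)).const_mul (l:ℝ))
        have e1 : l - 1 - 1 = l - 2 := by omega
        have e2 : l + 1 - 1 = l := by omega
        rw [e1, e2] at this
        exact this)
      hψderiv
      ((continuous_const.mul ((continuous_const.mul (continuous_pow _)).sub
        (continuous_const.mul (continuous_pow _)))).intervalIntegrable 0 1)
      (((hφ.continuousOn).mono hsub').mono (by rw [huIcc])|>.intervalIntegrable)
    rw [h]
    simp [zero_pow (show l - 1 ≠ 0 by omega), zero_pow (show l + 1 ≠ 0 by omega)]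
  -- integrability of the pieces
  have hψc : ContinuousOn ψ (Set.Icc (0:ℝ) 1) :=
    (hψ.continuousOn).mono hsub'
  have hint1 : IntervalIntegrable (fun x : ℝ => x ^ l * ψ x) MeasureTheory.volume 0 1 :=
    (((continuous_pow l).continuousOn).mul hψc).mono (by rw [huIcc]) |>.intervalIntegrable
  have hint2 : IntervalIntegrable (fun x : ℝ => x ^ (l-2) * ψ x) MeasureTheory.volume 0 1 :=
    (((continuous_pow (l-2)).continuousOn).mul hψc).mono (by rw [huIcc]) |>.intervalIntegrable
  calc ∫ x in (0:ℝ)..1, x ^ l * deriv g x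
      = - ∫ x in (0:ℝ)..1, ((l:ℝ) * x ^ (l-1)) * g x := ibp1
    _ = - ∫ x in (0:ℝ)..1, ((l:ℝ) * (x ^ (l-1) - x ^ (l+1))) * φ x := by
        congr 1; exact intervalIntegral.integral_congr (fun x _ => hinner x)
    _ = ∫ x in (0:ℝ)..1,
          ((l:ℝ) * (((l-1:ℕ):ℝ) * x ^ (l-2) - ((l+1:ℕ):ℝ) * x ^ l)) * ψ x := by
        rw [ibp2, neg_neg]
    _ = ∫ x in (0:ℝ)..1,
          ((l:ℝ) * ((l:ℝ)-1) * (x ^ (l-2) * ψ x) - (l:ℝ) * ((l:ℝ)+1) * (x ^ l * ψ x)) := by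
        apply intervalIntegral.integral_congr
        intro x _
        have : ((l-1:ℕ):ℝ) = (l:ℝ) - 1 := by
          push_cast [Nat.cast_sub (by omega : 1 ≤ l)]; ring
        rw [this]; push_cast; ring
    _ = -((l : ℝ) * (l + 1)) * (∫ x in (0 : ℝ)..1, x ^ l * ψ x)
      + (l : ℝ) * ((l : ℝ) - 1) * ∫ x in (0 : ℝ)..1, x ^ (l - 2) * ψ x := by
        rw [intervalIntegral.integral_sub (hint2.const_mul _) (hint1.const_mul _),
          intervalIntegral.integral_const_mul, intervalIntegral.integral_const_mul]
        ring
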